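/- For nonnegative integers $p,q$ with $p\ge q$ and a positive integer $n$, $\sum_{k=0}^n(-1)^k\binom{n}{k}\frac{\binom{2p-q+n+k}{k}\binom{q+k}{k}}{\binom{p+k}{k}^2}\,\frac{q}{q+k}\,H_{p+k}^{\langle2\rangle}=\frac{\binom{p-q+n}{n}^2}{\binom{p+n}{n}^2}\Big(H_{p-q}^{\langle2\rangle}+H_{p+n}^{\langle2\rangle}-H_{p-q+n}^{\langle2\rangle}\Big)$. -/

import Mathlib

open Finset

noncomputable def Hr (l m : ℕ) : ℝ :=
  ∑ k ∈ Finset.range m, 1 / ((k : ℝ) + 1) ^ l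

noncomputable def gbinomR (w : ℝ) (k : ℕ) : ℝ :=
  (∏ i ∈ Finset.range k, (w - i)) / (Nat.factorial k)

noncomputable def fT (q r n k : ℕ) : ℝ :=
  (-1 : ℝ) ^ k * (n.choose k : ℝ) * ((q + 2*r + n + k).choose k : ℝ) *
    ((q + k).choose k : ℝ) * (q : ℝ) /
    (((q + r + k).choose k : ℝ) ^ 2 * ((q : ℝ) + (k : ℝ)))

noncomputable def gT (q r n j : ℕ) : ℝ :=
  (-1 : ℝ) ^ j * ((n+1).choose j : ℝ) * ((q + 2*r + n + j).choose j : ℝ) *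
    ((q + j).choose j : ℝ) * (q : ℝ) /
    (((q + r + j).choose j : ℝ) ^ 2 * ((q : ℝ) + (j : ℝ)))

noncomputable def bT (q r n k : ℕ) : ℝ :=
  -(((q:ℝ) + 2*r + 2*n + 2) * (k : ℝ) * ((q:ℝ) + (r:ℝ) + (k:ℝ)) ^ 2 /
    (((q:ℝ) + r + n + 1) ^ 2 * ((q:ℝ) + 2*r + n + 1) * ((n:ℝ) + 1))) * gT q r n k

noncomputable def BT (q r n j : ℕ) : ℝ :=
  -((j : ℝ) * ((q:ℝ) + (r:ℝ) + (j:ℝ)) ^ 2 / ((q:ℝ) + r + n + 1) ^ 2) * gT q r n j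

lemma chooseR_pos (a k : ℕ) : (0:ℝ) < ((a+k).choose k : ℝ) := by
  exact_mod_cast Nat.choose_pos (Nat.le_add_left k a)

lemma eB (m k : ℕ) :
    ((m+k+1).choose (k+1) : ℝ) = ((m+k).choose k : ℝ) * ((m:ℝ)+(k:ℝ)+1) / ((k:ℝ)+1) := by
  have h := Nat.add_one_mul_choose_eq (m+k) k
  have h2 := congrArg (Nat.cast (R := ℝ)) h
  push_cast at h2
  have hk : ((k:ℝ)+1) ≠ 0 := by positivity
  field_simp
  linarith [h2]



lemma eC (m k : ℕ) :
    ((m+k+1).choose k : ℝ) = ((m+k).choose k : ℝ) * ((m:ℝ)+(k:ℝ)+1) / ((m:ℝ)+1) := by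
  have h := Nat.choose_mul_succ_eq (m+k) k
  have h3 : m + k + 1 - k = m + 1 := by omega
  rw [h3] at h
  have h2 := congrArg (Nat.cast (R := ℝ)) h
  push_cast at h2
  have hm : ((m:ℝ)+1) ≠ 0 := by positivity
  field_simp
  linarith [h2]



lemma eA (n k : ℕ) (h : k ≤ n + 1) :
    ((n+1).choose (k+1) : ℝ) = ((n+1).choose k : ℝ) * ((n:ℝ)+1-(k:ℝ)) / ((k:ℝ)+1) := by
  have h1 := Nat.choose_succ_right_eq (n+1) k
  have h2 := congrArg (Nat.cast (R := ℝ)) h1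
  have h3 : ((n + 1 - k : ℕ) : ℝ) = (n:ℝ)+1-(k:ℝ) := by
    rw [Nat.cast_sub h]; push_cast; ring
  push_cast at h2
  rw [h3] at h2
  have hk : ((k:ℝ)+1) ≠ 0 := by positivity
  field_simp
  linarith [h2]



lemma eD (n k : ℕ) (h : k ≤ n + 1) :
    ((n).choose k : ℝ) = ((n+1).choose k : ℝ) * ((n:ℝ)+1-(k:ℝ)) / ((n:ℝ)+1) := by
  have h1 := Nat.choose_mul_succ_eq n k
  have h2 := congrArg (Nat.cast (R := ℝ)) h1
  have h3 : ((n + 1 - k : ℕ) : ℝ) = (n:ℝ)+1-(k:ℝ) := by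
    rw [Nat.cast_sub h]; push_cast; ring
  push_cast at h2
  rw [h3] at h2
  have hn : ((n:ℝ)+1) ≠ 0 := by positivity
  field_simp
  linarith [h2]



section
variable (q r n k : ℕ)

set_option maxHeartbeats 400000 in
lemma fup (hq : 1 ≤ q) :
    fT q r (n+1) k = gT q r n k * (((q:ℝ)+2*r+(n:ℝ)+(k:ℝ)+1)/((q:ℝ)+2*(r:ℝ)+(n:ℝ)+1)) := by
  have hq' : (1:ℝ) ≤ (q:ℝ) := by exact_mod_cast hq
  have hk0 : (0:ℝ) ≤ (k:ℝ) := Nat.cast_nonneg k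
  have hr0 : (0:ℝ) ≤ (r:ℝ) := Nat.cast_nonneg r
  have hn0 : (0:ℝ) ≤ (n:ℝ) := Nat.cast_nonneg n
  have h2 : (q:ℝ)+(k:ℝ) ≠ 0 := by nlinarith
  have h5 : (q:ℝ)+2*(r:ℝ)+(n:ℝ)+1 ≠ 0 := by nlinarith
  have hX4 : ((q+r+k).choose k : ℝ) ≠ 0 := ne_of_gt (chooseR_pos (q+r) k)
  simp only [fT, gT]
  rw [show q + 2*r + (n+1) + k = q + 2*r + n + k + 1 from by ring,
      show n + 1 = n + 1 from rfl, eC (q+2*r+n) k]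
  push_cast
  field_simp



set_option maxHeartbeats 400000 in
lemma fdown (hq : 1 ≤ q) (hk : k ≤ n + 1) :
    fT q r n k = gT q r n k * (((n:ℝ)+1-(k:ℝ))/((n:ℝ)+1)) := by
  have hq' : (1:ℝ) ≤ (q:ℝ) := by exact_mod_cast hq
  have hk0 : (0:ℝ) ≤ (k:ℝ) := Nat.cast_nonneg k
  have h2 : (q:ℝ)+(k:ℝ) ≠ 0 := by nlinarith
  have h4 : ((n:ℝ)+1) ≠ 0 := by positivity
  have hX4 : ((q+r+k).choose k : ℝ) ≠ 0 := ne_of_gt (chooseR_pos (q+r) k)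
  simp only [fT, gT]
  rw [eD n k hk]
  field_simp



set_option maxHeartbeats 400000 in
lemma grec (hq : 1 ≤ q) (hk : k ≤ n + 1) :
    gT q r n (k+1) = gT q r n k *
      (-((((n:ℝ)+1-(k:ℝ))*((q:ℝ)+2*(r:ℝ)+(n:ℝ)+(k:ℝ)+1)*((q:ℝ)+(k:ℝ))) /
        (((k:ℝ)+1)*((q:ℝ)+(r:ℝ)+(k:ℝ)+1)^2))) := by
  have hq' : (1:ℝ) ≤ (q:ℝ) := by exact_mod_cast hq
  have hk0 : (0:ℝ) ≤ (k:ℝ) := Nat.cast_nonneg k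
  have hr0 : (0:ℝ) ≤ (r:ℝ) := Nat.cast_nonneg r
  have hn0 : (0:ℝ) ≤ (n:ℝ) := Nat.cast_nonneg n
  have h1 : ((k:ℝ)+1) ≠ 0 := by positivity
  have h2 : (q:ℝ)+(k:ℝ) ≠ 0 := by nlinarith
  have h3 : (q:ℝ)+(k:ℝ)+1 ≠ 0 := by nlinarith
  have h7 : (q:ℝ)+(r:ℝ)+(k:ℝ)+1 ≠ 0 := by nlinarith
  have hX4 : ((q+r+k).choose k : ℝ) ≠ 0 := ne_of_gt (chooseR_pos (q+r) k)
  simp only [gT]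
  rw [show q + 2*r + n + (k+1) = q + 2*r + n + k + 1 from by ring,
      show q + (k+1) = q + k + 1 from by ring,
      show q + r + (k+1) = q + r + k + 1 from by ring]
  rw [eA n k hk, eB (q+2*r+n) k, eB q k, eB (q+r) k]
  push_cast
  field_simp
  ring



end

noncomputable def RT (q r n : ℕ) : ℝ :=
  ((r+n).choose n : ℝ)^2 / ((q+r+n).choose n : ℝ)^2

section
variable (q r n k : ℕ)

lemma gT_top : gT q r n (n+2) = 0 := by
  have h : (n+1).choose (n+2) = 0 := Nat.choose_eq_zero_of_lt (by omega)
  simp [gT, h]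

lemma fT_top : fT q r n (n+1) = 0 := by
  have h : n.choose (n+1) = 0 := Nat.choose_eq_zero_of_lt (by omega)
  simp [fT, h]

lemma bT_zero : bT q r n 0 = 0 := by simp [bT]

lemma bT_top : bT q r n (n+2) = 0 := by simp [bT, gT_top]

lemma BT_zero : BT q r n 0 = 0 := by simp [BT]

lemma BT_top : BT q r n (n+2) = 0 := by simp [BT, gT_top]

set_option maxHeartbeats 800000 in
lemma bT_succ (hq : 1 ≤ q) (hk : k ≤ n+1) :
    bT q r n (k+1) = gT q r n k *
      ((((q:ℝ)+2*(r:ℝ)+2*(n:ℝ)+2)*((n:ℝ)+1-(k:ℝ))*((q:ℝ)+2*(r:ℝ)+(n:ℝ)+(k:ℝ)+1)*((q:ℝ)+(k:ℝ))) /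
        (((q:ℝ)+(r:ℝ)+(n:ℝ)+1)^2*((q:ℝ)+2*(r:ℝ)+(n:ℝ)+1)*((n:ℝ)+1))) := by
  have hq' : (1:ℝ) ≤ (q:ℝ) := by exact_mod_cast hq
  have hk0 : (0:ℝ) ≤ (k:ℝ) := Nat.cast_nonneg k
  have hr0 : (0:ℝ) ≤ (r:ℝ) := Nat.cast_nonneg r
  have hn0 : (0:ℝ) ≤ (n:ℝ) := Nat.cast_nonneg n
  have h1 : ((k:ℝ)+1) ≠ 0 := by positivity
  have h4 : ((n:ℝ)+1) ≠ 0 := by positivity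
  have h5 : (q:ℝ)+2*(r:ℝ)+(n:ℝ)+1 ≠ 0 := by nlinarith
  have h6 : (q:ℝ)+(r:ℝ)+(n:ℝ)+1 ≠ 0 := by nlinarith
  have h7 : (q:ℝ)+(r:ℝ)+(k:ℝ)+1 ≠ 0 := by nlinarith
  simp only [bT]
  rw [grec q r n k hq hk]
  push_cast
  field_simp
  ring



set_option maxHeartbeats 800000 in
lemma BT_succ (hq : 1 ≤ q) (hk : k ≤ n+1) :
    BT q r n (k+1) = gT q r n k *
      ((((n:ℝ)+1-(k:ℝ))*((q:ℝ)+2*(r:ℝ)+(n:ℝ)+(k:ℝ)+1)*((q:ℝ)+(k:ℝ))) /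
        ((q:ℝ)+(r:ℝ)+(n:ℝ)+1)^2) := by
  have hq' : (1:ℝ) ≤ (q:ℝ) := by exact_mod_cast hq
  have hk0 : (0:ℝ) ≤ (k:ℝ) := Nat.cast_nonneg k
  have hr0 : (0:ℝ) ≤ (r:ℝ) := Nat.cast_nonneg r
  have hn0 : (0:ℝ) ≤ (n:ℝ) := Nat.cast_nonneg n
  have h1 : ((k:ℝ)+1) ≠ 0 := by positivity
  have h6 : (q:ℝ)+(r:ℝ)+(n:ℝ)+1 ≠ 0 := by nlinarith
  have h7 : (q:ℝ)+(r:ℝ)+(k:ℝ)+1 ≠ 0 := by nlinarith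
  simp only [BT]
  rw [grec q r n k hq hk]
  push_cast
  field_simp
  ring



set_option maxHeartbeats 1200000 in
lemma certA (hq : 1 ≤ q) (hk : k ≤ n+1) :
    fT q r (n+1) k =
      ((r:ℝ)+(n:ℝ)+1)^2/((q:ℝ)+(r:ℝ)+(n:ℝ)+1)^2 * fT q r n k
        + (bT q r n (k+1) - bT q r n k) := by
  have hq' : (1:ℝ) ≤ (q:ℝ) := by exact_mod_cast hq
  have hk0 : (0:ℝ) ≤ (k:ℝ) := Nat.cast_nonneg k
  have hr0 : (0:ℝ) ≤ (r:ℝ) := Nat.cast_nonneg r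
  have hn0 : (0:ℝ) ≤ (n:ℝ) := Nat.cast_nonneg n
  have h4 : ((n:ℝ)+1) ≠ 0 := by positivity
  have h5 : (q:ℝ)+2*(r:ℝ)+(n:ℝ)+1 ≠ 0 := by nlinarith
  have h6 : (q:ℝ)+(r:ℝ)+(n:ℝ)+1 ≠ 0 := by nlinarith
  rw [fup q r n k hq, fdown q r n k hq hk, bT_succ q r n k hq hk]
  simp only [bT]
  field_simp
  ring



set_option maxHeartbeats 1200000 in
lemma certB (hq : 1 ≤ q) (hk : k ≤ n+1) :
    (k:ℝ) * gT q r n k =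
      (-(q:ℝ)*((n:ℝ)+1)*((q:ℝ)+2*(r:ℝ)+(n:ℝ)+1)/((q:ℝ)+(r:ℝ)+(n:ℝ)+1)^2) * fT q r n k
        + (BT q r n (k+1) - BT q r n k) := by
  have hq' : (1:ℝ) ≤ (q:ℝ) := by exact_mod_cast hq
  have hk0 : (0:ℝ) ≤ (k:ℝ) := Nat.cast_nonneg k
  have hr0 : (0:ℝ) ≤ (r:ℝ) := Nat.cast_nonneg r
  have hn0 : (0:ℝ) ≤ (n:ℝ) := Nat.cast_nonneg n
  have h4 : ((n:ℝ)+1) ≠ 0 := by positivity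
  have h6 : (q:ℝ)+(r:ℝ)+(n:ℝ)+1 ≠ 0 := by nlinarith
  rw [fdown q r n k hq hk, BT_succ q r n k hq hk]
  simp only [BT]
  field_simp
  ring



set_option maxHeartbeats 800000 in
lemma Rstep :
    RT q r (n+1) = ((r:ℝ)+(n:ℝ)+1)^2/((q:ℝ)+(r:ℝ)+(n:ℝ)+1)^2 * RT q r n := by
  have h4 : ((n:ℝ)+1) ≠ 0 := by positivity
  have hr0 : (0:ℝ) ≤ (r:ℝ) := Nat.cast_nonneg r
  have hn0 : (0:ℝ) ≤ (n:ℝ) := Nat.cast_nonneg n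
  have hq0 : (0:ℝ) ≤ (q:ℝ) := Nat.cast_nonneg q
  have h6 : (q:ℝ)+(r:ℝ)+(n:ℝ)+1 ≠ 0 := by nlinarith
  have hX1 : ((r+n).choose n : ℝ) ≠ 0 := ne_of_gt (chooseR_pos r n)
  have hX2 : ((q+r+n).choose n : ℝ) ≠ 0 := ne_of_gt (chooseR_pos (q+r) n)
  simp only [RT]
  rw [show r+(n+1) = r+n+1 from by ring, show q+r+(n+1) = q+r+n+1 from by ring,
      eB r n, eB (q+r) n]
  push_cast
  field_simp

end

lemma Hr_succ (m : ℕ) : Hr 2 (m+1) = Hr 2 m + 1/((m:ℝ)+1)^2 := by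
  simp [Hr, Finset.sum_range_succ]

lemma pureId (q r : ℕ) (hq : 1 ≤ q) :
    ∀ n, ∑ k ∈ range (n+1), fT q r n k = RT q r n := by
  intro n
  induction n with
  | zero =>
    have hq0 : (q:ℝ) ≠ 0 := by positivity
    simp [fT, RT]
    omega
  | succ n ih =>
    have hstep : ∀ k ∈ range (n+2), fT q r (n+1) k =
        ((r:ℝ)+(n:ℝ)+1)^2/((q:ℝ)+(r:ℝ)+(n:ℝ)+1)^2 * fT q r n k
          + (bT q r n (k+1) - bT q r n k) := fun k hk =>
      certA q r n k hq (Nat.lt_succ_iff.mp (mem_range.mp hk))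
    rw [Finset.sum_congr rfl hstep, Finset.sum_add_distrib, ← Finset.mul_sum,
        Finset.sum_range_sub (fun k => bT q r n k), bT_top, bT_zero,
        Finset.sum_range_succ, fT_top, ih, Rstep]
    ring

lemma sumB (q r : ℕ) (hq : 1 ≤ q) (n : ℕ) :
    ∑ j ∈ range (n+3), (j:ℝ) * gT q r n j =
      (-(q:ℝ)*((n:ℝ)+1)*((q:ℝ)+2*(r:ℝ)+(n:ℝ)+1)/((q:ℝ)+(r:ℝ)+(n:ℝ)+1)^2) * RT q r n := by
  rw [show n+3 = (n+2)+1 from by omega, Finset.sum_range_succ, gT_top]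
  have hstep : ∀ j ∈ range (n+2), (j:ℝ) * gT q r n j =
      (-(q:ℝ)*((n:ℝ)+1)*((q:ℝ)+2*(r:ℝ)+(n:ℝ)+1)/((q:ℝ)+(r:ℝ)+(n:ℝ)+1)^2) * fT q r n j
        + (BT q r n (j+1) - BT q r n j) := fun j hj =>
    certB q r n j hq (Nat.lt_succ_iff.mp (mem_range.mp hj))
  rw [Finset.sum_congr rfl hstep, Finset.sum_add_distrib, ← Finset.mul_sum,
      Finset.sum_range_sub (fun j => BT q r n j), BT_top, BT_zero,
      Finset.sum_range_succ, fT_top, pureId q r hq n]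
  ring

set_option maxHeartbeats 3200000 in
lemma mainId (q r : ℕ) (hq : 1 ≤ q) :
    ∀ n, ∑ k ∈ range (n+1), fT q r n k * Hr 2 (q+r+k) =
      RT q r n * (Hr 2 r + Hr 2 (q+r+n) - Hr 2 (r+n)) := by
  intro n
  induction n with
  | zero =>
    have hq0 : (q:ℝ) ≠ 0 := by positivity
    simp [fT, RT]
    rw [div_self hq0]
    ring
  | succ n ih =>
    have hq' : (1:ℝ) ≤ (q:ℝ) := by exact_mod_cast hq
    have hr0 : (0:ℝ) ≤ (r:ℝ) := Nat.cast_nonneg r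
    have hn0 : (0:ℝ) ≤ (n:ℝ) := Nat.cast_nonneg n
    have h4 : ((n:ℝ)+1) ≠ 0 := by positivity
    have h5 : (q:ℝ)+2*(r:ℝ)+(n:ℝ)+1 ≠ 0 := by nlinarith
    have h6 : (q:ℝ)+(r:ℝ)+(n:ℝ)+1 ≠ 0 := by nlinarith
    have h8 : (r:ℝ)+(n:ℝ)+1 ≠ 0 := by nlinarith
    have e1 : ∀ k ∈ range (n+2), fT q r (n+1) k * Hr 2 (q+r+k) =
        ((r:ℝ)+(n:ℝ)+1)^2/((q:ℝ)+(r:ℝ)+(n:ℝ)+1)^2 * (fT q r n k * Hr 2 (q+r+k))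
        + ((bT q r n (k+1) * Hr 2 (q+r+(k+1)) - bT q r n k * Hr 2 (q+r+k))
           - bT q r n (k+1) * (1/((q:ℝ)+(r:ℝ)+(k:ℝ)+1)^2)) := by
      intro k hk
      have hk' : k ≤ n+1 := Nat.lt_succ_iff.mp (mem_range.mp hk)
      rw [certA q r n k hq hk', show q+r+(k+1) = (q+r+k)+1 from by ring, Hr_succ (q+r+k)]
      push_cast
      ring
    rw [Finset.sum_congr rfl e1, Finset.sum_add_distrib, ← Finset.mul_sum,
        Finset.sum_sub_distrib,
        Finset.sum_range_sub (fun k => bT q r n k * Hr 2 (q+r+k)), bT_top, bT_zero]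
    have e2 : ∀ k ∈ range (n+2), bT q r n (k+1) * (1/((q:ℝ)+(r:ℝ)+(k:ℝ)+1)^2)
        = -(((q:ℝ)+2*(r:ℝ)+2*(n:ℝ)+2)/(((q:ℝ)+(r:ℝ)+(n:ℝ)+1)^2*((q:ℝ)+2*(r:ℝ)+(n:ℝ)+1)*((n:ℝ)+1)))
          * (((k:ℝ)+1) * gT q r n (k+1)) := by
      intro k hk
      have hk0 : (0:ℝ) ≤ (k:ℝ) := Nat.cast_nonneg k
      have h7 : (q:ℝ)+(r:ℝ)+(k:ℝ)+1 ≠ 0 := by nlinarith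
      simp only [bT]
      push_cast
      field_simp
      ring
    rw [Finset.sum_congr rfl e2, ← Finset.mul_sum]
    have e3 : ∑ k ∈ range (n+2), ((k:ℝ)+1) * gT q r n (k+1)
        = ∑ j ∈ range (n+3), (j:ℝ) * gT q r n j := by
      rw [show n+3 = (n+2)+1 from by omega,
          Finset.sum_range_succ' (fun j => (j:ℝ) * gT q r n j) (n+2)]
      push_cast
      simp
    rw [e3, sumB q r hq n, Finset.sum_range_succ, fT_top, ih, Rstep]
    rw [show q+r+(n+1) = (q+r+n)+1 from by ring, Hr_succ (q+r+n),
        show r+(n+1) = (r+n)+1 from by ring, Hr_succ (r+n)]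
    push_cast
    have scal : -(((q:ℝ)+2*(r:ℝ)+2*(n:ℝ)+2)/(((q:ℝ)+(r:ℝ)+(n:ℝ)+1)^2*((q:ℝ)+2*(r:ℝ)+(n:ℝ)+1)*((n:ℝ)+1))) * (-(q:ℝ)*((n:ℝ)+1)*((q:ℝ)+2*(r:ℝ)+(n:ℝ)+1)/((q:ℝ)+(r:ℝ)+(n:ℝ)+1)^2)
        = ((r:ℝ)+(n:ℝ)+1)^2/((q:ℝ)+(r:ℝ)+(n:ℝ)+1)^2 * (1/(((r:ℝ)+(n:ℝ))+1)^2 - 1/(((q:ℝ)+(r:ℝ)+(n:ℝ))+1)^2) := by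
      field_simp
      ring
    linear_combination (-(RT q r n)) * scal


theorem stmt6 (p q n : ℕ) (hpq : q ≤ p) (hn : 0 < n) :
    ∑ k ∈ Finset.range (n + 1), (-1 : ℝ) ^ k * (n.choose k : ℝ) *
        (((2 * p - q + n + k).choose k : ℝ) * ((q + k).choose k : ℝ) /
          ((p + k).choose k : ℝ) ^ 2) *
        (if k = 0 then 1 else (q : ℝ) / ((q : ℝ) + k)) * Hr 2 (p + k) =
      ((p - q + n).choose n : ℝ) ^ 2 / ((p + n).choose n : ℝ) ^ 2 *
        (Hr 2 (p - q) + Hr 2 (p + n) - Hr 2 (p - q + n)) := by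
  rcases Nat.eq_zero_or_pos q with hq0 | hqpos
  · subst hq0
    rw [Finset.sum_eq_single 0]
    · have h1 : p - 0 + n = p + n := by omega
      have h2 : p - 0 = p := by omega
      rw [h1, h2]
      have hc : ((p+n).choose n : ℝ) ≠ 0 := ne_of_gt (chooseR_pos p n)
      simp
      field_simp
    · intro b _ hb
      simp [hb]
    · intro h
      exact absurd (Finset.mem_range.mpr (by omega)) h
  · obtain ⟨r, rfl⟩ : ∃ r, p = q + r := ⟨p - q, by omega⟩
    have h1 : 2 * (q + r) - q = q + 2*r := by omega
    have h2 : q + r - q = r := by omega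
    simp only [h1, h2]
    have conv : ∀ k ∈ Finset.range (n+1), (-1 : ℝ) ^ k * (n.choose k : ℝ) *
        (((q + 2*r + n + k).choose k : ℝ) * ((q + k).choose k : ℝ) /
          ((q + r + k).choose k : ℝ) ^ 2) *
        (if k = 0 then 1 else (q : ℝ) / ((q : ℝ) + k)) * Hr 2 (q + r + k)
        = fT q r n k * Hr 2 (q+r+k) := by
      intro k _
      have hD : ((q+r+k).choose k : ℝ) ≠ 0 := ne_of_gt (chooseR_pos (q+r) k)
      have hcoeff : (-1 : ℝ) ^ k * (n.choose k : ℝ) *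
          (((q + 2*r + n + k).choose k : ℝ) * ((q + k).choose k : ℝ) /
            ((q + r + k).choose k : ℝ) ^ 2) *
          (if k = 0 then 1 else (q : ℝ) / ((q : ℝ) + k)) = fT q r n k := by
        rcases Nat.eq_zero_or_pos k with hk0 | hkpos
        · subst hk0
          have hq' : (q:ℝ) ≠ 0 := by positivity
          simp [fT]
          field_simp
        · rw [if_neg (by omega)]
          have hq' : (1:ℝ) ≤ (q:ℝ) := by exact_mod_cast hqpos
          have hk0' : (0:ℝ) ≤ (k:ℝ) := Nat.cast_nonneg k
          have hqk : (q:ℝ)+(k:ℝ) ≠ 0 := by nlinarith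
          simp only [fT]
          field_simp
      rw [hcoeff]
    rw [Finset.sum_congr rfl conv, mainId q r hqpos n]
    simp only [RT]
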